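/- arXiv:2605.22688 — 2 statements merged into one kernel-verified Lean document; each statement's English description precedes it below -/
import Mathlib

section
/- For all z ∈ ℂ with |z| < 1, the polynomial M_{2,4}(z) = 1 − 2z/5 + z²/40 satisfies |Log(M_{2,4}(z))| < 1, where Log is the principal logarithm; equivalently, M_{2,4} is subordinate to e^z on the unit disk. -/
theorem M24_exp_subordinate (z : ℂ) (hz : ‖z‖ < 1) :
    ‖Complex.log (1 - 2 * z / 5 + z ^ 2 / 40)‖ < 1 := by
  set u : ℂ := -(2 * z / 5) + z ^ 2 / 40 with hu
  have heq : (1 : ℂ) - 2 * z / 5 + z ^ 2 / 40 = 1 + u := by rw [hu]; ring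
  have hzn : ‖z‖ < 1 := hz
  have hun : ‖u‖ ≤ 17 / 40 := by
    calc ‖u‖ ≤ ‖-(2 * z / 5)‖ + ‖z ^ 2 / 40‖ := norm_add_le _ _
    _ = 2 / 5 * ‖z‖ + ‖z‖ ^ 2 / 40 := by
        simp [norm_div, norm_pow, norm_mul, abs_of_pos]
        ring
    _ ≤ 2 / 5 * 1 + 1 ^ 2 / 40 := by gcongr
    _ = 17 / 40 := by norm_num
  have hhalf : ‖u‖ ≤ 1 / 2 := hun.trans (by norm_num)
  have hb := Complex.norm_log_one_add_half_le_self hhalf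
  calc ‖Complex.log (1 - 2 * z / 5 + z ^ 2 / 40)‖
      = ‖Complex.log (1 + u)‖ := by rw [heq]
    _ ≤ 3 / 2 * ‖u‖ := hb
    _ ≤ 3 / 2 * (17 / 40) := by gcongr
    _ < 1 := by norm_num
end

section
/- Let q: 𝔻 → ℂ be analytic with q(0) = 1, and suppose that for all z in the unit disk, z²q''(z) + (α+1−z)·z·q'(z) + n·z·q(z) = 0, where α ∈ ℝ with (1/e)·(α − 1 − n) > 0 (i.e., α > n + 1), and n ∈ ℕ. If q = M_{n,α} (the normalized Laguerre polynomial), then q is subordinate to e^z on 𝔻, i.e., there is an analytic w: 𝔻 → 𝔻 with w(0) = 0 and q(z) = e^{w(z)}. -/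
/-- Pochhammer (rising factorial) symbol `(x)_k = x (x+1) ⋯ (x+k-1)`. -/
noncomputable def poch (x : ℝ) (k : ℕ) : ℝ := ∏ i ∈ Finset.range k, (x + i)

/-- Normalized Laguerre polynomial
`M_{n,α}(z) = Σ_{k=0}^{n} ((-1)^k n! / ((1+α)_k (n-k)! k!)) z^k`. -/
noncomputable def M (n : ℕ) (α : ℝ) (z : ℂ) : ℂ :=
  ∑ k ∈ Finset.range (n + 1),
    (((-1 : ℝ) ^ k * n.factorial /
        (poch (1 + α) k * (n - k).factorial * k.factorial) : ℝ) : ℂ) * z ^ k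

open Finset

noncomputable def sig (n : ℕ) (α : ℝ) : ℕ → ℝ
  | 0 => n / (1 + α)
  | k + 1 => (sig n α k +
      ∑ i ∈ (Finset.range (k+1)).attach, sig n α i.1 * sig n α (k - i.1)) / (k + 2 + α)
  decreasing_by
  · exact Nat.lt_succ_self k
  · exact Nat.lt_succ_of_le (Nat.le_of_lt_succ (Finset.mem_range.mp i.2))
  · exact Nat.lt_succ_of_le (Nat.sub_le k i.1)

lemma sig_succ (n : ℕ) (α : ℝ) (k : ℕ) : sig n α (k+1) = (sig n α k +
    ∑ i ∈ Finset.range (k+1), sig n α i * sig n α (k - i)) / (k + 2 + α) := by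
  rw [sig]
  congr 2
  exact Finset.sum_attach _ (fun i => sig n α i * sig n α (k - i))

lemma tri (f : ℕ → ℕ → ℝ) (N : ℕ) :
    ∑ k ∈ range N, ∑ i ∈ range (k+1), f i (k - i)
    = ∑ p ∈ range N, ∑ d ∈ range (N - p), f p d := by
  induction N with
  | zero => simp
  | succ N ih =>
    have h1 : ∀ p ∈ range N, ∑ d ∈ range (N + 1 - p), f p d
        = ∑ d ∈ range (N - p), f p d + f p (N - p) := by
      intro p hp
      have hpN : p ≤ N := Nat.le_of_lt (mem_range.mp hp)
      rw [Nat.succ_sub hpN, Finset.sum_range_succ]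
    rw [Finset.sum_range_succ, ih, Finset.sum_range_succ (fun p => ∑ d ∈ range (N + 1 - p), f p d),
      Finset.sum_congr rfl h1, Finset.sum_add_distrib, Finset.sum_range_succ, Nat.sub_self]
    simp
    ring

noncomputable def gam (n : ℕ) (α : ℝ) (k : ℕ) : ℝ :=
  if k ≤ n then (-1)^k * n.factorial / (poch (1+α) k * (n-k).factorial * k.factorial) else 0

noncomputable def Acoef (n : ℕ) (α : ℝ) (k : ℕ) : ℝ :=
  ∑ i ∈ range (k+1), sig n α i * gam n α (k - i)

section
variable {n : ℕ} {α : ℝ} (hα : (n : ℝ) + 1 < α)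
include hα

lemma alpha_pos : (0:ℝ) < 1 + α := by
  have : (0:ℝ) ≤ n := Nat.cast_nonneg n
  linarith

lemma sig_nonneg : ∀ k, 0 ≤ sig n α k := by
  intro k
  induction k using Nat.strong_induction_on with
  | _ k ih =>
    match k with
    | 0 =>
      rw [sig]
      have := alpha_pos hα
      positivity
    | k + 1 =>
      rw [sig_succ]
      have h1 : 0 ≤ sig n α k := ih k (Nat.lt_succ_self k)
      have h2 : 0 ≤ ∑ i ∈ Finset.range (k+1), sig n α i * sig n α (k - i) := by
        apply Finset.sum_nonneg
        intro i hi
        exact mul_nonneg (ih i (Nat.lt_succ_of_le (Nat.le_of_lt_succ (Finset.mem_range.mp hi))))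
          (ih (k - i) (Nat.lt_succ_of_le (Nat.sub_le k i)))
      have h3 : (0:ℝ) < k + 2 + α := by
        have h4 : (0:ℝ) ≤ k := Nat.cast_nonneg k
        have h5 : (0:ℝ) ≤ n := Nat.cast_nonneg n
        linarith
      positivity

lemma sig_rec (k : ℕ) : ((k:ℝ) + 2 + α) * sig n α (k+1) = sig n α k +
    ∑ i ∈ Finset.range (k+1), sig n α i * sig n α (k - i) := by
  rw [sig_succ]
  have h3 : ((k:ℝ) + 2 + α) ≠ 0 := by
    have h4 : (0:ℝ) ≤ k := Nat.cast_nonneg k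
    have h5 : (0:ℝ) ≤ n := Nat.cast_nonneg n
    have : (0:ℝ) < (k:ℝ) + 2 + α := by linarith
    exact ne_of_gt this
  field_simp

lemma sig_zero_eq : (1 + α) * sig n α 0 = n := by
  rw [sig]
  have := alpha_pos hα
  field_simp

lemma S_le : ∀ N, ∑ k ∈ range N, sig n α k ≤ (n:ℝ) / (α - 1) := by
  have hn0 : (0:ℝ) ≤ n := Nat.cast_nonneg n
  have ham : (0:ℝ) < α - 1 := by linarith
  have hap : (0:ℝ) < 1 + α := by linarith
  set t : ℝ := (n:ℝ) / (α - 1) with hto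
  have ht0 : 0 ≤ t := by positivity
  have htm : t * (α - 1) = n := div_mul_cancel₀ _ (ne_of_gt ham)
  have ht1 : t ≤ 1 := by
    rw [hto, div_le_one ham]; linarith
  intro N
  induction N with
  | zero => simpa using ht0
  | succ N ih =>
    set S : ℝ := ∑ k ∈ range N, sig n α k with hS
    have hS0 : 0 ≤ S := Finset.sum_nonneg fun i _ => sig_nonneg hα i
    have key : ∑ k ∈ range (N+1), ((k:ℝ) + 1 + α) * sig n α k
        = n + S + ∑ k ∈ range N, ∑ i ∈ range (k+1), sig n α i * sig n α (k - i) := by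
      rw [Finset.sum_range_succ' (fun k => ((k:ℝ) + 1 + α) * sig n α k)]
      push_cast
      have h0 : ((0:ℝ) + 1 + α) * sig n α 0 = n := by
        rw [zero_add]; exact sig_zero_eq hα
      have h1 : ∀ i ∈ range N, ((i:ℝ) + 1 + 1 + α) * sig n α (i+1)
          = sig n α i + ∑ p ∈ range (i+1), sig n α p * sig n α (i - p) := by
        intro i _
        have := sig_rec hα i
        convert this using 2
        ring
      rw [Finset.sum_congr rfl h1, Finset.sum_add_distrib]
      rw [h0]
      ring
    have hQ : ∑ k ∈ range N, ∑ i ∈ range (k+1), sig n α i * sig n α (k - i) ≤ S * S := by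
      have htri := tri (fun p d => sig n α p * sig n α d) N
      rw [htri]
      have h2 : ∀ p ∈ range N, ∑ d ∈ range (N - p), sig n α p * sig n α d
          ≤ sig n α p * S := by
        intro p _
        rw [← Finset.mul_sum]
        apply mul_le_mul_of_nonneg_left _ (sig_nonneg hα p)
        apply Finset.sum_le_sum_of_subset_of_nonneg
        · exact Finset.range_subset_range.mpr (Nat.sub_le N p)
        · intro i _ _; exact sig_nonneg hα i
      calc ∑ p ∈ range N, ∑ d ∈ range (N - p), sig n α p * sig n α d
          ≤ ∑ p ∈ range N, sig n α p * S := Finset.sum_le_sum h2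
        _ = S * S := by rw [← Finset.sum_mul]
    have hlow : (1 + α) * ∑ k ∈ range (N+1), sig n α k
        ≤ ∑ k ∈ range (N+1), ((k:ℝ) + 1 + α) * sig n α k := by
      rw [Finset.mul_sum]
      apply Finset.sum_le_sum
      intro k _
      apply mul_le_mul_of_nonneg_right _ (sig_nonneg hα k)
      have : (0:ℝ) ≤ k := Nat.cast_nonneg k
      linarith
    have hup : ∑ k ∈ range (N+1), ((k:ℝ) + 1 + α) * sig n α k ≤ (1 + α) * t := by
      rw [key]
      have hSS : S * S ≤ t * t := mul_le_mul ih ih hS0 ht0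
      nlinarith [htm, ht1, ht0, mul_le_mul_of_nonneg_left ht1 ht0]
    have hfin := le_trans hlow hup
    exact le_of_mul_le_mul_left hfin hap

lemma poch_pos (k : ℕ) : 0 < poch (1+α) k := by
  apply Finset.prod_pos
  intro i _
  have h1 : (0:ℝ) ≤ n := Nat.cast_nonneg n
  have h2 : (0:ℝ) ≤ i := Nat.cast_nonneg i
  linarith

lemma E (k : ℕ) : ((k:ℝ)+1) * (((k:ℝ)+1)+α) * gam n α (k+1) = ((k:ℝ) - (n:ℝ)) * gam n α k := by
  rcases lt_trichotomy k n with hk | hk | hk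
  · have hk1 : k + 1 ≤ n := hk
    unfold gam
    rw [if_pos hk1, if_pos hk.le]
    have hpoch : poch (1+α) (k+1) = poch (1+α) k * (1+α+k) := Finset.prod_range_succ _ _
    have hm : n - k = (n - (k+1)) + 1 := by omega
    have hfac : ((n - k).factorial : ℝ) = (((n-(k+1) : ℕ) : ℝ) + 1) * ((n - (k+1)).factorial) := by
      rw [hm, Nat.factorial_succ]; push_cast; ring
    have hcast : ((n - (k+1) : ℕ) : ℝ) + 1 = (n:ℝ) - k := by
      have := Nat.cast_sub hk1 (R := ℝ)
      rw [this]; push_cast; ring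
    have hfacs : ((k+1).factorial : ℝ) = ((k:ℝ)+1) * (k.factorial : ℝ) := by
      rw [Nat.factorial_succ]; push_cast; ring
    have hP : (0:ℝ) < poch (1+α) k := poch_pos hα k
    have hPk : (0:ℝ) < 1 + α + k := by
      have h1 : (0:ℝ) ≤ n := Nat.cast_nonneg n
      have h2 : (0:ℝ) ≤ k := Nat.cast_nonneg k
      linarith
    have hf1 : (0:ℝ) < ((n - (k+1)).factorial : ℝ) := by positivity
    have hf2 : (0:ℝ) < (k.factorial : ℝ) := by positivity
    have hnk : (0:ℝ) < (n:ℝ) - k := by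
      have := Nat.cast_lt (α := ℝ) |>.mpr hk
      linarith
    rw [hpoch, hfac, hfacs, hcast]
    have hpow : ((-1:ℝ))^(k+1) = -((-1:ℝ))^k := by rw [pow_succ]; ring
    rw [hpow]
    field_simp
    ring
  · subst hk
    unfold gam
    rw [if_neg (by omega)]
    simp
  · unfold gam
    rw [if_neg (by omega), if_neg (by omega)]
    simp

lemma K : ∀ k : ℕ, ((k:ℝ)+1) * gam n α (k+1) = - Acoef n α k := by
  intro k
  induction k using Nat.strong_induction_on with
  | _ k IH =>
  have hka : (0:ℝ) < (k:ℝ) + 1 + α := by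
    have h1 : (0:ℝ) ≤ n := Nat.cast_nonneg n
    have h2 : (0:ℝ) ≤ k := Nat.cast_nonneg k
    linarith
  have main : ((k:ℝ) + 1 + α) * Acoef n α k = ((n:ℝ) - (k:ℝ)) * gam n α k := by
    have expand : ((k:ℝ)+1+α) * Acoef n α k
        = ∑ i ∈ range (k+1), (((i:ℝ)+1+α) * sig n α i) * gam n α (k-i)
          + ∑ i ∈ range (k+1), sig n α i * (((k-i : ℕ):ℝ) * gam n α (k-i)) := by
      unfold Acoef
      rw [Finset.mul_sum, ← Finset.sum_add_distrib]
      apply Finset.sum_congr rfl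
      intro i hi
      have hik : i ≤ k := Nat.lt_succ_iff.mp (mem_range.mp hi)
      have hcast : ((k - i : ℕ):ℝ) = (k:ℝ) - (i:ℝ) := by
        rw [Nat.cast_sub hik]
      rw [hcast]; ring
    have term1 : ∑ i ∈ range (k+1), (((i:ℝ)+1+α) * sig n α i) * gam n α (k-i)
        = (n:ℝ) * gam n α k
          + ∑ i ∈ range k, sig n α i * gam n α (k-(i+1))
          + ∑ i ∈ range k, (∑ p ∈ range (i+1), sig n α p * sig n α (i - p)) * gam n α (k-(i+1)) := by
      rw [Finset.sum_range_succ' (fun i => (((i:ℝ)+1+α) * sig n α i) * gam n α (k-i))]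
      have h0 : (((0:ℕ):ℝ)+1+α) * sig n α 0 * gam n α (k-0) = (n:ℝ) * gam n α k := by
        have := sig_zero_eq hα
        push_cast
        rw [show ((0:ℝ)+1+α) = 1 + α by ring, this, Nat.sub_zero]
      have h1 : ∀ i ∈ range k, ((((i+1:ℕ)):ℝ)+1+α) * sig n α (i+1) * gam n α (k-(i+1))
          = (sig n α i + ∑ p ∈ range (i+1), sig n α p * sig n α (i - p)) * gam n α (k-(i+1)) := by
        intro i _
        have h2 := sig_rec hα i
        have hc : (((i+1:ℕ)):ℝ)+1+α = (i:ℝ) + 2 + α := by push_cast; ring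
        rw [hc, h2]
      rw [Finset.sum_congr rfl h1, h0]
      have hsplit : (∑ i ∈ range k, ((sig n α i + ∑ p ∈ range (i+1), sig n α p * sig n α (i - p)) * gam n α (k-(i+1))))
          = ∑ i ∈ range k, sig n α i * gam n α (k-(i+1))
            + ∑ i ∈ range k, (∑ p ∈ range (i+1), sig n α p * sig n α (i - p)) * gam n α (k-(i+1)) := by
        rw [← Finset.sum_add_distrib]
        apply Finset.sum_congr rfl
        intro i _
        ring
      rw [hsplit]
      ring
    have B1 : ∑ i ∈ range k, sig n α i * gam n α (k-(i+1)) = -((k:ℝ) * gam n α k) := by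
      cases k with
      | zero => simp
      | succ m =>
        have hc : ∀ i ∈ range (m+1), sig n α i * gam n α ((m+1)-(i+1)) = sig n α i * gam n α (m - i) := by
          intro i _
          rw [Nat.succ_sub_succ]
        rw [Finset.sum_congr rfl hc]
        have hIH := IH m (Nat.lt_succ_self m)
        unfold Acoef at hIH
        push_cast
        linarith [hIH]
    have term2 : ∑ i ∈ range (k+1), sig n α i * (((k-i : ℕ):ℝ) * gam n α (k-i))
        = - ∑ i ∈ range k, sig n α i * Acoef n α (k-(i+1)) := by
      rw [Finset.sum_range_succ, Nat.sub_self]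
      simp only [Nat.cast_zero, zero_mul, mul_zero, add_zero]
      rw [← Finset.sum_neg_distrib]
      apply Finset.sum_congr rfl
      intro i hi
      have hik : i < k := mem_range.mp hi
      have h1 : k - i = (k - (i+1)) + 1 := by omega
      have hIH := IH (k-(i+1)) (by omega)
      rw [h1]
      have hc : ((k - (i+1) + 1 : ℕ):ℝ) = ((k-(i+1):ℕ):ℝ) + 1 := by push_cast; ring
      rw [hc, hIH]
      ring
    have B2 : ∑ i ∈ range k, (∑ p ∈ range (i+1), sig n α p * sig n α (i - p)) * gam n α (k-(i+1))
        = ∑ i ∈ range k, sig n α i * Acoef n α (k-(i+1)) := by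
      have htri := tri (fun p d => sig n α p * sig n α d * gam n α (k - 1 - (p + d))) k
      have hL : ∑ i ∈ range k, ∑ p ∈ range (i+1), sig n α p * sig n α (i - p) * gam n α (k - 1 - (p + (i - p)))
          = ∑ i ∈ range k, (∑ p ∈ range (i+1), sig n α p * sig n α (i - p)) * gam n α (k-(i+1)) := by
        apply Finset.sum_congr rfl
        intro i hi
        have hik : i < k := mem_range.mp hi
        rw [Finset.sum_mul]
        apply Finset.sum_congr rfl
        intro p hp
        have hpi : p ≤ i := Nat.lt_succ_iff.mp (mem_range.mp hp)
        have he1 : p + (i - p) = i := by omega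
        rw [he1]
        have he2 : k - 1 - i = k - (i+1) := by omega
        rw [he2]
      have hR : ∑ p ∈ range k, ∑ d ∈ range (k - p), sig n α p * sig n α d * gam n α (k - 1 - (p + d))
          = ∑ i ∈ range k, sig n α i * Acoef n α (k-(i+1)) := by
        apply Finset.sum_congr rfl
        intro i hi
        have hik : i < k := mem_range.mp hi
        unfold Acoef
        rw [Finset.mul_sum]
        have hkk : k - i = (k - (i+1)) + 1 := by omega
        rw [hkk]
        apply Finset.sum_congr rfl
        intro d hd
        have hdk : d ≤ k - (i+1) := Nat.lt_succ_iff.mp (mem_range.mp hd)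
        have he3 : k - 1 - (i + d) = k - (i+1) - d := by omega
        rw [he3]
        ring
      rw [← hL, htri, hR]
    rw [expand, term1, term2, B1, B2]
    ring
  have hE := E hα k
  have hzero : ((k:ℝ)+1+α) * (((k:ℝ)+1) * gam n α (k+1) + Acoef n α k) = 0 := by
    have h3 : ((k:ℝ)+1+α) * (((k:ℝ)+1) * gam n α (k+1)) = ((k:ℝ) - n) * gam n α k := by
      rw [← hE]; ring
    rw [mul_add, h3, main]
    ring
  rcases mul_eq_zero.mp hzero with h | h
  · exact absurd h (ne_of_gt hka)
  · linarith [h]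

end
open Metric in
theorem laguerre_exp_subordination (n : ℕ) (α : ℝ)
    (hα : (1 / Real.exp 1) * (α - 1 - n) > 0)
    (q : ℂ → ℂ) (hq : DifferentiableOn ℂ q (ball (0 : ℂ) 1))
    (hq0 : q 0 = 1)
    (hode : ∀ z ∈ ball (0 : ℂ) 1,
      z ^ 2 * iteratedDeriv 2 q z + ((α : ℂ) + 1 - z) * z * deriv q z
        + (n : ℂ) * z * q z = 0)
    (hqM : q = M n α) :
    ∃ w : ℂ → ℂ, DifferentiableOn ℂ w (ball (0 : ℂ) 1) ∧ w 0 = 0 ∧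
      (∀ z ∈ ball (0 : ℂ) 1, ‖w z‖ < 1) ∧
      ∀ z ∈ ball (0 : ℂ) 1, q z = Complex.exp (w z) := by
  subst hqM
  have hα' : (n : ℝ) + 1 < α := by
    by_contra hcon
    push_neg at hcon
    have h1 : α - 1 - n ≤ 0 := by linarith
    have h2 : (0:ℝ) < 1 / Real.exp 1 := by positivity
    nlinarith
  have hn0 : (0:ℝ) ≤ n := Nat.cast_nonneg n
  have ham : (0:ℝ) < α - 1 := by linarith
  set t : ℝ := (n:ℝ) / (α - 1) with ht
  have ht1 : t < 1 := by
    rw [ht, div_lt_one ham]; linarith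
  have hsnn := sig_nonneg hα'
  have hsum : Summable (sig n α) := summable_of_sum_range_le hsnn (S_le hα')
  have htsum : ∑' k, sig n α k ≤ t := Real.tsum_le_of_sum_range_le hsnn (S_le hα')
  -- the Schwarz-type function
  set g : ℕ → ℂ → ℂ := fun k z => -((sig n α k / ((k:ℝ)+1) : ℝ) : ℂ) * z^(k+1) with hgdef
  set w : ℂ → ℂ := fun z => ∑' k, g k z with hwdef
  set s : ℂ → ℂ := fun z => ∑' k, ((sig n α k : ℝ) : ℂ) * z^k with hsdef
  -- termwise derivatives
  have hgd : ∀ (k:ℕ), ∀ (z : ℂ), z ∈ ball (0:ℂ) 1 →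
      HasDerivAt (g k) (-(((sig n α k : ℝ):ℂ) * z^k)) z := by
    intro k z _
    have h1 : HasDerivAt (fun z : ℂ => z^(k+1)) (((k+1:ℕ):ℂ) * z^k) z := by
      simpa using hasDerivAt_pow (k+1) z
    have h2 := h1.const_mul (-((sig n α k / ((k:ℝ)+1) : ℝ) : ℂ))
    refine h2.congr_deriv (Eq.symm ?_)
    have hk0 : ((k:ℂ)+1) ≠ 0 := Nat.cast_add_one_ne_zero k
    push_cast
    field_simp
  have hgb : ∀ (k:ℕ), ∀ (z : ℂ), z ∈ ball (0:ℂ) 1 →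
      ‖-(((sig n α k : ℝ):ℂ) * z^k)‖ ≤ sig n α k := by
    intro k z hz
    have hz1 : ‖z‖ ≤ 1 := le_of_lt (mem_ball_zero_iff.mp hz)
    rw [norm_neg, norm_mul, norm_pow, Complex.norm_real, Real.norm_eq_abs,
      abs_of_nonneg (hsnn k)]
    calc sig n α k * ‖z‖^k ≤ sig n α k * 1 := by
          apply mul_le_mul_of_nonneg_left _ (hsnn k)
          exact pow_le_one₀ (norm_nonneg z) hz1
      _ = sig n α k := mul_one _
  have hg00 : ∀ k : ℕ, g k 0 = 0 := by
    intro k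
    have : g k 0 = -((sig n α k / ((k:ℝ)+1) : ℝ):ℂ) * (0:ℂ)^(k+1) := rfl
    rw [this, zero_pow (Nat.succ_ne_zero k), mul_zero]
  have hg0 : Summable (fun k => g k 0) := by
    apply summable_zero.congr
    intro k
    exact (hg00 k).symm
  have hwd : ∀ z ∈ ball (0:ℂ) 1, HasDerivAt w (-(s z)) z := by
    intro z hz
    have h1 := hasDerivAt_tsum_of_isPreconnected hsum isOpen_ball
      (convex_ball (0:ℂ) 1).isPreconnected hgd hgb (mem_ball_self one_pos) hg0 hz
    have h2 : ∑' k, -(((sig n α k : ℝ):ℂ) * z^k) = -(s z) := by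
      rw [hsdef]
      exact tsum_neg
    rw [h2] at h1
    exact h1
  -- M as finite/infinite power series
  have hgam0 : ∀ k : ℕ, n < k → gam n α k = 0 := by
    intro k hk
    unfold gam
    rw [if_neg (by omega)]
  have hMeq : ∀ z : ℂ, M n α z = ∑ k ∈ Finset.range (n+1), ((gam n α k : ℝ) : ℂ) * z^k := by
    intro z
    unfold M gam
    apply Finset.sum_congr rfl
    intro k hk
    rw [if_pos (Nat.lt_succ_iff.mp (Finset.mem_range.mp hk))]
  have hMts : ∀ z : ℂ, M n α z = ∑' k, ((gam n α k : ℝ):ℂ) * z^k := by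
    intro z
    rw [hMeq z]
    symm
    apply tsum_eq_sum
    intro k hk
    have hnk : n < k := by
      simp only [Finset.mem_range] at hk
      omega
    rw [hgam0 k hnk]
    simp
  -- derivative of M
  set Dv : ℂ → ℂ := fun z => ∑ k ∈ Finset.range (n+1),
      (((((k:ℝ)+1) * gam n α (k+1)) : ℝ) : ℂ) * z^k with hDvdef
  have hMd : ∀ z : ℂ, HasDerivAt (M n α) (Dv z) z := by
    intro z
    have h1 : ∀ k ∈ Finset.range (n+1), HasDerivAt (fun z : ℂ => ((gam n α k : ℝ):ℂ) * z^k)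
        (((gam n α k : ℝ):ℂ) * ((k:ℂ) * z^(k-1))) z := by
      intro k _
      exact (hasDerivAt_pow k z).const_mul _
    have h2 := HasDerivAt.sum h1
    have h3 : (∑ k ∈ Finset.range (n+1), fun z : ℂ => ((gam n α k : ℝ):ℂ) * z^k) = M n α := by
      funext y; rw [Finset.sum_apply, hMeq y]
    rw [h3] at h2
    refine h2.congr_deriv (Eq.symm ?_)
    show (∑ k ∈ Finset.range (n+1), (((((k:ℝ)+1) * gam n α (k+1)) : ℝ) : ℂ) * z^k)
        = ∑ k ∈ Finset.range (n+1), ((gam n α k : ℝ):ℂ) * ((k:ℂ) * z^(k-1))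
    rw [Finset.sum_range_succ' (fun k => ((gam n α k : ℝ):ℂ) * ((k:ℂ) * z^(k-1)))]
    rw [Finset.sum_range_succ (fun k => (((((k:ℝ)+1) * gam n α (k+1)) : ℝ) : ℂ) * z^k)]
    rw [hgam0 (n+1) (Nat.lt_succ_self n)]
    simp only [Nat.cast_zero, zero_mul, mul_zero, add_zero, Complex.ofReal_zero]
    apply Finset.sum_congr rfl
    intro i _
    push_cast [Nat.add_sub_cancel]
    ring
  -- the key pointwise identity  s z * M z = - Dv z
  have hkey : ∀ z ∈ ball (0:ℂ) 1, s z * M n α z = -(Dv z) := by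
    intro z hz
    have hz1 : ‖z‖ ≤ 1 := le_of_lt (mem_ball_zero_iff.mp hz)
    have hnf : Summable (fun k => ‖((sig n α k : ℝ):ℂ) * z^k‖) := by
      apply Summable.of_nonneg_of_le (fun k => norm_nonneg _) _ hsum
      intro k
      rw [norm_mul, norm_pow, Complex.norm_real, Real.norm_eq_abs, abs_of_nonneg (hsnn k)]
      calc sig n α k * ‖z‖^k ≤ sig n α k * 1 := by
            apply mul_le_mul_of_nonneg_left _ (hsnn k)
            exact pow_le_one₀ (norm_nonneg z) hz1
        _ = sig n α k := mul_one _
    have hng : Summable (fun k => ‖((gam n α k : ℝ):ℂ) * z^k‖) := by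
      apply summable_of_ne_finset_zero (s := Finset.range (n+1))
      intro k hk
      have hnk : n < k := by
        simp only [Finset.mem_range] at hk
        omega
      rw [hgam0 k hnk]
      simp
    have hcp := tsum_mul_tsum_eq_tsum_sum_antidiagonal_of_summable_norm hnf hng
    have hinner : ∀ k : ℕ, (∑ p ∈ antidiagonal k,
        (((sig n α p.1 : ℝ):ℂ) * z^p.1) * (((gam n α p.2 : ℝ):ℂ) * z^p.2))
        = -(((((k:ℝ)+1) * gam n α (k+1) : ℝ)):ℂ) * z^k := by
      intro k
      have h4 : (∑ p ∈ antidiagonal k,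
          (((sig n α p.1 : ℝ):ℂ) * z^p.1) * (((gam n α p.2 : ℝ):ℂ) * z^p.2))
          = ((Acoef n α k : ℝ):ℂ) * z^k := by
        rw [Finset.Nat.sum_antidiagonal_eq_sum_range_succ_mk]
        unfold Acoef
        rw [Complex.ofReal_sum, Finset.sum_mul]
        apply Finset.sum_congr rfl
        intro i hi
        have hik : i ≤ k := Nat.lt_succ_iff.mp (Finset.mem_range.mp hi)
        have hzz : z^i * z^(k-i) = z^k := by
          rw [← pow_add]
          congr 1
          omega
        calc ((sig n α i : ℝ):ℂ) * z^i * (((gam n α (k-i) : ℝ):ℂ) * z^(k-i))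
            = ((sig n α i : ℝ):ℂ) * ((gam n α (k-i) : ℝ):ℂ) * (z^i * z^(k-i)) := by ring
          _ = ((sig n α i * gam n α (k-i) : ℝ):ℂ) * z^k := by
              rw [hzz, Complex.ofReal_mul]
      rw [h4]
      have h5 : Acoef n α k = -(((k:ℝ)+1) * gam n α (k+1)) := by
        have := K hα' k
        linarith
      rw [h5]
      push_cast
      ring
    have h6 : ∀ k : ℕ, (-(((((k:ℝ)+1) * gam n α (k+1) : ℝ)):ℂ) * z^k)
        = -((((((k:ℝ)+1) * gam n α (k+1) : ℝ)):ℂ) * z^k) := by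
      intro k; ring
    have hDv : ∑' (k : ℕ), (-(((((k:ℝ)+1) * gam n α (k+1) : ℝ)):ℂ) * z^k) = -(Dv z) := by
      have hDvz : Dv z = ∑ k ∈ Finset.range (n+1),
          (((((k:ℝ)+1) * gam n α (k+1)) : ℝ) : ℂ) * z^k := rfl
      rw [hDvz, tsum_congr h6, tsum_neg]
      congr 1
      apply tsum_eq_sum
      intro k hk
      have hnk : n < k + 1 := by
        simp only [Finset.mem_range] at hk
        omega
      rw [hgam0 (k+1) hnk]
      simp
    have hsz : s z = ∑' (k : ℕ), ((sig n α k : ℝ):ℂ) * z^k := rfl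
    rw [hsz, hMts z, hcp, tsum_congr hinner]
    exact hDv
  -- the function exp(-w) * M is constant = 1 on the ball
  set F : ℂ → ℂ := fun z => Complex.exp (-(w z)) * M n α z with hFdef
  have hF0 : ∀ z ∈ ball (0:ℂ) 1, HasDerivAt F 0 z := by
    intro z hz
    have h1 := hwd z hz
    have h2 : HasDerivAt (fun y => -(w y)) (s z) z := by
      have := h1.neg
      rw [neg_neg] at this
      exact this
    have h3 := h2.cexp
    have h4 := h3.mul (hMd z)
    have hval : Complex.exp (-(w z)) * (s z) * M n α z + Complex.exp (-(w z)) * Dv z = 0 := by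
      have hk := hkey z hz
      calc Complex.exp (-(w z)) * (s z) * M n α z + Complex.exp (-(w z)) * Dv z
          = Complex.exp (-(w z)) * (s z * M n α z + Dv z) := by ring
        _ = 0 := by rw [hk]; ring
    have h5 : HasDerivAt F (Complex.exp (-(w z)) * (s z) * M n α z
        + Complex.exp (-(w z)) * Dv z) z := h4
    rw [hval] at h5
    exact h5
  have hFdiff : DifferentiableOn ℂ F (ball (0:ℂ) 1) :=
    fun z hz => (hF0 z hz).differentiableAt.differentiableWithinAt
  have hFzero : ∀ z ∈ ball (0:ℂ) 1, fderivWithin ℂ F (ball (0:ℂ) 1) z = 0 := by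
    intro z hz
    rw [fderivWithin_of_isOpen isOpen_ball hz]
    have := (hF0 z hz).hasFDerivAt.fderiv
    rw [this]
    exact ContinuousLinearMap.ext fun x => by simp
  have hw0 : w 0 = 0 := by
    have hwz : w 0 = ∑' (k : ℕ), g k 0 := rfl
    rw [hwz, tsum_congr hg00]
    exact tsum_zero
  have hF02 : F 0 = 1 := by
    have hFz : F 0 = Complex.exp (-(w 0)) * M n α 0 := rfl
    rw [hFz, hw0, neg_zero, Complex.exp_zero, one_mul, hq0]
  have hconst : ∀ z ∈ ball (0:ℂ) 1, F z = 1 := by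
    intro z hz
    have := Convex.is_const_of_fderivWithin_eq_zero (convex_ball (0:ℂ) 1) hFdiff hFzero hz
      (mem_ball_self one_pos)
    rw [this, hF02]
  -- assemble
  refine ⟨w, ?_, hw0, ?_, ?_⟩
  · intro z hz
    exact (hwd z hz).differentiableAt.differentiableWithinAt
  · intro z hz
    have hz1 : ‖z‖ ≤ 1 := le_of_lt (mem_ball_zero_iff.mp hz)
    have hnb : ∀ k : ℕ, ‖g k z‖ ≤ sig n α k := by
      intro k
      have hgz : g k z = -((sig n α k / ((k:ℝ)+1) : ℝ):ℂ) * z^(k+1) := rfl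
      rw [hgz, norm_mul, norm_neg, norm_pow, Complex.norm_real, Real.norm_eq_abs]
      have hd0 : 0 ≤ sig n α k / ((k:ℝ)+1) := by
        apply div_nonneg (hsnn k)
        positivity
      rw [abs_of_nonneg hd0]
      have hd1 : sig n α k / ((k:ℝ)+1) ≤ sig n α k := by
        apply div_le_self (hsnn k)
        have : (0:ℝ) ≤ k := Nat.cast_nonneg k
        linarith
      calc sig n α k / ((k:ℝ)+1) * ‖z‖^(k+1) ≤ sig n α k / ((k:ℝ)+1) * 1 := by
            apply mul_le_mul_of_nonneg_left _ hd0
            exact pow_le_one₀ (norm_nonneg z) hz1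
        _ = sig n α k / ((k:ℝ)+1) := mul_one _
        _ ≤ sig n α k := hd1
    have hsg : Summable (fun k => ‖g k z‖) :=
      Summable.of_nonneg_of_le (fun k => norm_nonneg _) hnb hsum
    calc ‖w z‖ ≤ ∑' k, ‖g k z‖ := norm_tsum_le_tsum_norm hsg
      _ ≤ ∑' k, sig n α k := Summable.tsum_le_tsum hnb hsg hsum
      _ ≤ t := htsum
      _ < 1 := ht1
  · intro z hz
    have h8 : Complex.exp (-(w z)) * M n α z = 1 := hconst z hz
    have hne := Complex.exp_ne_zero (w z)
    rw [Complex.exp_neg] at h8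
    field_simp at h8
    exact h8
end
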